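/- Let F ∈ ℝ^{n×n} have rank r, let Q₀ ∈ ℝ^{n×n} be symmetric positive definite, and let U ∈ ℝ^{n×(n−r)} satisfy Im U = ker Fᵀ. Define Λ = U(UᵀQ₀⁻¹U)⁻¹UᵀQ₀⁻¹(Fᵀ)⁺. Then for any z₀ ∈ ℝⁿ, the infimum of ((Fᵀ)⁺Fᵀz₀ − d)ᵀ Q₀⁻¹ ((Fᵀ)⁺Fᵀz₀ − d) over all d ∈ ℝⁿ with Fᵀd = 0 is attained at d = Λ(Fᵀz₀). -/

import Mathlib

open Matrix

/-- `P` is the Moore–Penrose pseudoinverse of `M`. -/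
def IsMoorePenrose {m n : Type*} [Fintype m] [Fintype n]
    (M : Matrix m n ℝ) (P : Matrix n m ℝ) : Prop :=
  M * P * M = M ∧ P * M * P = P ∧ (M * P)ᵀ = M * P ∧ (P * M)ᵀ = P * M

/-- The infimum of `((Fᵀ)⁺Fᵀz₀ - d)ᵀ Q₀⁻¹ ((Fᵀ)⁺Fᵀz₀ - d)` over `{d : Fᵀd = 0}`
is attained at `d = Λ(Fᵀz₀)`, where `Λ = U(UᵀQ₀⁻¹U)⁻¹UᵀQ₀⁻¹(Fᵀ)⁺`. -/
theorem inf_attained_at_Lambda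
    (n r : ℕ) (hr : r ≤ n)
    (F Q₀ : Matrix (Fin n) (Fin n) ℝ)
    (hrank : F.rank = r)
    (hQsym : Q₀.IsSymm) (hQpos : Q₀.PosDef)
    (U : Matrix (Fin n) (Fin (n - r)) ℝ)
    (hU : ∀ d : Fin n → ℝ, Fᵀ.mulVec d = 0 ↔ ∃ c : Fin (n - r) → ℝ, U.mulVec c = d)
    (Fp : Matrix (Fin n) (Fin n) ℝ) (hFp : IsMoorePenrose Fᵀ Fp)
    (Λ : Matrix (Fin n) (Fin n) ℝ)
    (hΛ : Λ = U * (Uᵀ * Q₀⁻¹ * U)⁻¹ * Uᵀ * Q₀⁻¹ * Fp)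
    (z₀ : Fin n → ℝ) :
    Fᵀ.mulVec (Λ.mulVec (Fᵀ.mulVec z₀)) = 0 ∧
    ∀ d : Fin n → ℝ, Fᵀ.mulVec d = 0 →
      (Fp.mulVec (Fᵀ.mulVec z₀) - Λ.mulVec (Fᵀ.mulVec z₀)) ⬝ᵥ
        Q₀⁻¹.mulVec (Fp.mulVec (Fᵀ.mulVec z₀) - Λ.mulVec (Fᵀ.mulVec z₀)) ≤
      (Fp.mulVec (Fᵀ.mulVec z₀) - d) ⬝ᵥ
        Q₀⁻¹.mulVec (Fp.mulVec (Fᵀ.mulVec z₀) - d) := by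
  set Q : Matrix (Fin n) (Fin n) ℝ := Q₀⁻¹ with hQdef
  have hQpd : Q.PosDef := hQpos.inv
  have hQsymm : Qᵀ = Q := by
    rw [hQdef, transpose_nonsing_inv, hQsym.eq]
  -- U has image contained in ker Fᵀ
  have hFU : ∀ c : Fin (n - r) → ℝ, Fᵀ.mulVec (U.mulVec c) = 0 :=
    fun c => (hU _).2 ⟨c, rfl⟩
  -- injectivity of U
  have hUinj : Function.Injective U.mulVecLin := by
    have hrange : LinearMap.range U.mulVecLin = LinearMap.ker Fᵀ.mulVecLin := by
      ext x
      simp only [LinearMap.mem_range, LinearMap.mem_ker, mulVecLin_apply]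
      exact ((hU x).symm)
    have hkerF : Module.finrank ℝ (LinearMap.ker Fᵀ.mulVecLin) = n - r := by
      have h1 := LinearMap.finrank_range_add_finrank_ker Fᵀ.mulVecLin
      have h2 : Module.finrank ℝ (LinearMap.range Fᵀ.mulVecLin) = r := by
        have : Fᵀ.rank = r := by rw [rank_transpose, hrank]
        simpa [Matrix.rank] using this
      rw [h2, Module.finrank_pi] at h1
      simp only [Fintype.card_fin] at h1
      omega
    have hrk : Module.finrank ℝ (LinearMap.range U.mulVecLin) = n - r := by
      rw [hrange, hkerF]
    have h3 := LinearMap.finrank_range_add_finrank_ker U.mulVecLin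
    rw [hrk, Module.finrank_pi] at h3
    simp only [Fintype.card_fin] at h3
    have hker0 : Module.finrank ℝ (LinearMap.ker U.mulVecLin) = 0 := by omega
    rw [← LinearMap.ker_eq_bot]
    exact Submodule.finrank_eq_zero.mp hker0
  have hUv : ∀ c : Fin (n - r) → ℝ, U.mulVec c = 0 → c = 0 := by
    intro c hc
    have := hUinj (a₁ := c) (a₂ := 0) (by simpa using hc)
    exact this
  -- G = UᵀQU is positive definite
  set G : Matrix (Fin (n - r)) (Fin (n - r)) ℝ := Uᵀ * Q * U with hGdef
  have hGpd : G.PosDef := by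
    refine posDef_iff_dotProduct_mulVec.mpr ⟨?_, ?_⟩
    · show Gᴴ = G
      have : Gᴴ = Gᵀ := rfl
      rw [this, hGdef, transpose_mul, transpose_mul, transpose_transpose, hQsymm,
        Matrix.mul_assoc]
    · intro x hx
      have hUx : U.mulVec x ≠ 0 := fun h => hx (hUv x h)
      have := (posDef_iff_dotProduct_mulVec.mp hQpd).2 hUx
      simpa [hGdef, ← mulVec_mulVec, dotProduct_mulVec, ← mulVec_transpose,
        star_trivial] using this
  have hGdet : IsUnit G.det := isUnit_iff_ne_zero.mpr (ne_of_gt hGpd.det_pos)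
  have hGinv : G * G⁻¹ = 1 := mul_nonsing_inv _ hGdet
  -- key orthogonality identity
  have key : Uᵀ * Q * Λ = Uᵀ * Q * Fp := by
    rw [hΛ]
    calc Uᵀ * Q * (U * (Uᵀ * Q * U)⁻¹ * Uᵀ * Q * Fp)
        = (Uᵀ * Q * U) * (Uᵀ * Q * U)⁻¹ * (Uᵀ * (Q * Fp)) := by
          simp only [Matrix.mul_assoc]
      _ = Uᵀ * Q * Fp := by rw [← hGdef, hGinv, Matrix.one_mul, Matrix.mul_assoc]
  set v : Fin n → ℝ := Fᵀ.mulVec z₀ with hv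
  clear_value v
  set x : Fin n → ℝ := Fp.mulVec v with hx
  clear_value x
  set m : Fin n → ℝ := Λ.mulVec v with hm
  clear_value m
  -- m is in the image of U
  have hmU : m = U.mulVec ((G⁻¹ * Uᵀ * Q * Fp).mulVec v) := by
    rw [hm, hΛ, mulVec_mulVec]
    congr 1
    simp only [Matrix.mul_assoc]
  constructor
  · rw [hmU]
    exact hFU _
  · intro d hd
    obtain ⟨c, hc⟩ := (hU d).1 hd
    -- orthogonality: Uᵀ Q (x - m) = 0
    have e1 : Uᵀ.mulVec (Q.mulVec x) = (Uᵀ * Q * Fp).mulVec v := by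
      rw [hx, mulVec_mulVec, mulVec_mulVec]
    have e2 : Uᵀ.mulVec (Q.mulVec m) = (Uᵀ * Q * Λ).mulVec v := by
      rw [hm, mulVec_mulVec, mulVec_mulVec]
    have horth : Uᵀ.mulVec (Q.mulVec (x - m)) = 0 := by
      rw [mulVec_sub, mulVec_sub, e1, e2, key, sub_self]
    -- cross term vanishes
    have hcross : ∀ e : Fin (n - r) → ℝ, (U.mulVec e) ⬝ᵥ Q.mulVec (x - m) = 0 := by
      intro e
      calc (U.mulVec e) ⬝ᵥ Q.mulVec (x - m)
          = (Uᵀ.mulVec (Q.mulVec (x - m))) ⬝ᵥ e := by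
            rw [dotProduct_comm, dotProduct_mulVec, ← mulVec_transpose]
        _ = 0 := by rw [horth, zero_dotProduct]
    have hb : m - d = U.mulVec (((G⁻¹ * Uᵀ * Q * Fp).mulVec v) - c) := by
      rw [mulVec_sub, ← hmU, hc]
    have hba : (m - d) ⬝ᵥ Q.mulVec (x - m) = 0 := by rw [hb]; exact hcross _
    have hab : (x - m) ⬝ᵥ Q.mulVec (m - d) = 0 := by
      rw [dotProduct_mulVec, ← mulVec_transpose, hQsymm, dotProduct_comm]
      exact hba
    have hnn : 0 ≤ (m - d) ⬝ᵥ Q.mulVec (m - d) := by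
      simpa using (posSemidef_iff_dotProduct_mulVec.mp hQpd.posSemidef).2 (m - d)
    have hxd : x - d = (x - m) + (m - d) := (sub_add_sub_cancel x m d).symm
    calc (x - m) ⬝ᵥ Q.mulVec (x - m)
        ≤ (x - m) ⬝ᵥ Q.mulVec (x - m) + (m - d) ⬝ᵥ Q.mulVec (m - d) :=
          le_add_of_nonneg_right hnn
      _ = (x - d) ⬝ᵥ Q.mulVec (x - d) := by
          rw [hxd, mulVec_add, dotProduct_add, add_dotProduct, add_dotProduct, hab, hba]
          ring
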